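/- For all real numbers t and s with s ≠ 0, the Lie algebra 𝔫_{t,s} is isomorphic, as a real Lie algebra, to the real Lie algebra underlying the complex Heisenberg Lie algebra, i.e. the Lie algebra of strictly upper triangular 3×3 complex matrices with the commutator bracket, regarded as a 6-dimensional real Lie algebra. -/

import Mathlib

attribute [local instance 100] LieRing.ofAssociativeRing

/-- The strictly upper triangular `3 × 3` complex matrices, with the commutator bracket,
regarded as a real Lie subalgebra of the real Lie algebra of all `3 × 3` complex matrices. -/
def complexHeisenberg : LieSubalgebra ℝ (Matrix (Fin 3) (Fin 3) ℂ) where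
  carrier := {M | ∀ i j : Fin 3, j ≤ i → M i j = 0}
  add_mem' := fun ha hb i j hij => by
    simp only [Matrix.add_apply, ha i j hij, hb i j hij, add_zero]
  zero_mem' := fun i j _ => rfl
  smul_mem' := fun c M hM i j hij => by
    simp only [Matrix.smul_apply, hM i j hij, smul_zero]
  lie_mem' := by
    intro x y hx hy i j hij
    rw [Ring.lie_def]
    simp only [Matrix.sub_apply, Matrix.mul_apply]
    rw [Finset.sum_eq_zero, Finset.sum_eq_zero, sub_zero]
    · intro k _
      rcases le_or_gt k i with h | h
      · rw [hy i k h, zero_mul]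
      · rw [hx k j (hij.trans h.le), mul_zero]
    · intro k _
      rcases le_or_gt k i with h | h
      · rw [hx i k h, zero_mul]
      · rw [hy k j (hij.trans h.le), mul_zero]

namespace CHaux

def Mabc (a b c : ℂ) : Matrix (Fin 3) (Fin 3) ℂ := !![0, a, c; 0, 0, b; 0, 0, 0]

lemma mem_Mabc (a b c : ℂ) : Mabc a b c ∈ complexHeisenberg := by
  intro i j hij
  fin_cases i <;> fin_cases j <;> first | rfl | (exact absurd hij (by decide))

def F (a b c : ℂ) : complexHeisenberg := ⟨Mabc a b c, mem_Mabc a b c⟩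

lemma bracketF (a b c a' b' c' : ℂ) :
    ⁅F a b c, F a' b' c'⁆ = F 0 0 (a * b' - b * a') := by
  apply Subtype.ext
  rw [LieSubalgebra.coe_bracket]
  show ⁅Mabc a b c, Mabc a' b' c'⁆ = Mabc 0 0 _
  rw [Ring.lie_def]
  ext i j
  fin_cases i <;> fin_cases j <;>
    simp [Mabc, Matrix.mul_apply, Fin.sum_univ_three, Matrix.vecHead, Matrix.vecTail] <;> ring

lemma smulF (x : ℝ) (a b c : ℂ) : x • F a b c = F (x * a) (x * b) (x * c) := by
  apply Subtype.ext
  show x • Mabc a b c = Mabc _ _ _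
  ext i j
  fin_cases i <;> fin_cases j <;> simp [Mabc, Complex.real_smul, Matrix.vecHead, Matrix.vecTail]

lemma addF (a b c a' b' c' : ℂ) : F a b c + F a' b' c' = F (a + a') (b + b') (c + c') := by
  apply Subtype.ext
  show Mabc a b c + Mabc a' b' c' = Mabc _ _ _
  ext i j
  fin_cases i <;> fin_cases j <;> simp [Mabc, Matrix.vecHead, Matrix.vecTail]

end CHaux

namespace CHaux

/-- The inverse linear map, from matrices to `L`, with explicit coefficients. -/
noncomputable def psi (t s r : ℝ) {L : Type} [LieRing L] [LieAlgebra ℝ L]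
    (e : Module.Basis (Fin 6) ℝ L) : Matrix (Fin 3) (Fin 3) ℂ →ₗ[ℝ] L where
  toFun M :=
    ((M 0 1).re - (2 * t / (s ^ 2 * r)) * (M 1 2).im) • e 0 +
    ((M 0 1).im / r) • e 1 +
    (-(M 1 2).re / s - (t / (s * r)) * (M 0 1).im) • e 2 +
    (-(M 1 2).im / (s * r)) • e 3 +
    ((M 0 2).re) • e 4 +
    ((M 0 2).im / r) • e 5
  map_add' M N := by
    simp only [Matrix.add_apply, Complex.add_re, Complex.add_im]
    module
  map_smul' c M := by
    simp only [Matrix.smul_apply, Complex.real_smul, Complex.mul_re, Complex.mul_im,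
      Complex.ofReal_re, Complex.ofReal_im, RingHom.id_apply]
    module

end CHaux

namespace CHaux

lemma coeF (a b c : ℂ) : ((F a b c : complexHeisenberg) : Matrix (Fin 3) (Fin 3) ℂ) = Mabc a b c := rfl

noncomputable def fAux (t s r : ℝ) : Fin 6 → complexHeisenberg
  | 0 => F 1 0 0
  | 1 => F (r * Complex.I) (-t) 0
  | 2 => F 0 (-s) 0
  | 3 => F ((-(2*t/s) : ℝ) : ℂ) (((-(s*r) : ℝ) : ℂ) * Complex.I) 0
  | 4 => F 0 0 1
  | 5 => F 0 0 (r * Complex.I)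

@[simp] lemma fAux0 (t s r : ℝ) : fAux t s r 0 = F 1 0 0 := rfl
@[simp] lemma fAux1 (t s r : ℝ) : fAux t s r 1 = F (r * Complex.I) (-t) 0 := rfl
@[simp] lemma fAux2 (t s r : ℝ) : fAux t s r 2 = F 0 (-s) 0 := rfl
@[simp] lemma fAux3 (t s r : ℝ) : fAux t s r 3 = F ((-(2*t/s) : ℝ) : ℂ) (((-(s*r) : ℝ) : ℂ) * Complex.I) 0 := rfl
@[simp] lemma fAux4 (t s r : ℝ) : fAux t s r 4 = F 0 0 1 := rfl
@[simp] lemma fAux5 (t s r : ℝ) : fAux t s r 5 = F 0 0 (r * Complex.I) := rfl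

noncomputable def phiAux (t s r : ℝ) {L : Type} [LieRing L] [LieAlgebra ℝ L]
    (e : Module.Basis (Fin 6) ℝ L) : L →ₗ[ℝ] complexHeisenberg := e.constr ℝ (fAux t s r)

noncomputable def psiAux (t s r : ℝ) {L : Type} [LieRing L] [LieAlgebra ℝ L]
    (e : Module.Basis (Fin 6) ℝ L) : complexHeisenberg →ₗ[ℝ] L :=
  (psi t s r e) ∘ₗ (complexHeisenberg.toSubmodule.subtype)

lemma psiF (t s r : ℝ) {L : Type} [LieRing L] [LieAlgebra ℝ L]
    (e : Module.Basis (Fin 6) ℝ L) (a b c : ℂ) :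
    psiAux t s r e (F a b c) =
      (a.re - (2 * t / (s ^ 2 * r)) * b.im) • e 0 +
      (a.im / r) • e 1 +
      (-b.re / s - (t / (s * r)) * a.im) • e 2 +
      (-b.im / (s * r)) • e 3 +
      c.re • e 4 +
      (c.im / r) • e 5 := by
  rfl

lemma phiE (t s r : ℝ) {L : Type} [LieRing L] [LieAlgebra ℝ L]
    (e : Module.Basis (Fin 6) ℝ L) (k : Fin 6) : phiAux t s r e (e k) = fAux t s r k :=
  Module.Basis.constr_basis e ℝ _ k

lemma psi_phi (t s r : ℝ) (hs : s ≠ 0) (hr : r ≠ 0)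
    {L : Type} [LieRing L] [LieAlgebra ℝ L] (e : Module.Basis (Fin 6) ℝ L) :
    (psiAux t s r e).comp (phiAux t s r e) = LinearMap.id := by
  apply e.ext
  intro k
  rw [LinearMap.comp_apply, phiE, LinearMap.id_apply]
  have hcomb : ∀ (c0 c1 c2 c3 c4 c5 : ℝ),
      c0 • e 0 + c1 • e 1 + c2 • e 2 + c3 • e 3 + c4 • e 4 + c5 • e 5 =
      (c0 • e 0 + c1 • e 1 + c2 • e 2 + c3 • e 3 + c4 • e 4 + c5 • e 5) := fun _ _ _ _ _ _ => rfl
  fin_cases k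
  · show psiAux t s r e (fAux t s r 0) = e 0
    rw [fAux0, psiF]
    norm_num
  · show psiAux t s r e (fAux t s r 1) = e 1
    rw [fAux1, psiF]
    norm_num [Complex.mul_re, Complex.mul_im]
    rw [div_self hr, show t / s - t / (s * r) * r = 0 by field_simp; ring]
    simp
  · show psiAux t s r e (fAux t s r 2) = e 2
    rw [fAux2, psiF]
    norm_num
    rw [show s / s = 1 from div_self hs]
    simp
  · show psiAux t s r e (fAux t s r 3) = e 3
    rw [fAux3, psiF]
    norm_num [Complex.mul_re, Complex.mul_im]
    rw [show -(2 * t / s) + 2 * t / (s ^ 2 * r) * (s * r) = 0 by field_simp; ring,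
      show s * r / (s * r) = 1 by rw [div_self (mul_ne_zero hs hr)]]
    simp
  · show psiAux t s r e (fAux t s r 4) = e 4
    rw [fAux4, psiF]
    norm_num
  · show psiAux t s r e (fAux t s r 5) = e 5
    rw [fAux5, psiF]
    norm_num [Complex.mul_re, Complex.mul_im]
    rw [div_self hr]
    simp

end CHaux

namespace CHaux

lemma F000 : F 0 0 0 = 0 := by
  apply Subtype.ext
  show Mabc 0 0 0 = (0 : Matrix (Fin 3) (Fin 3) ℂ)
  ext i j
  fin_cases i <;> fin_cases j <;> simp [Mabc, Matrix.vecHead, Matrix.vecTail]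

lemma F00eq (x : ℂ) (h : x = 0) : F 0 0 x = 0 := by rw [h]; exact F000

lemma phi_psi (t s r : ℝ) (hs : s ≠ 0) (hr : r ≠ 0)
    {L : Type} [LieRing L] [LieAlgebra ℝ L] (e : Module.Basis (Fin 6) ℝ L) :
    (phiAux t s r e).comp (psiAux t s r e) = LinearMap.id := by
  apply LinearMap.ext
  rintro ⟨M, hM⟩
  rw [LinearMap.comp_apply, LinearMap.id_apply]
  rw [show psiAux t s r e ⟨M, hM⟩ =
      ((M 0 1).re - (2 * t / (s ^ 2 * r)) * (M 1 2).im) • e 0 +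
      ((M 0 1).im / r) • e 1 +
      (-(M 1 2).re / s - (t / (s * r)) * (M 0 1).im) • e 2 +
      (-(M 1 2).im / (s * r)) • e 3 +
      ((M 0 2).re) • e 4 +
      ((M 0 2).im / r) • e 5 from rfl]
  simp only [map_add, map_smul, phiE, fAux0, fAux1, fAux2, fAux3, fAux4, fAux5, smulF, addF]
  apply Subtype.ext
  rw [coeF]
  have hMeq : M = Mabc (M 0 1) (M 1 2) (M 0 2) := by
    ext i j
    fin_cases i <;> fin_cases j <;> first | exact hM _ _ (by decide) | rfl
  have comp3 : ∀ a b c a' b' c' : ℂ, a = a' → b = b' → c = c' →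
      Mabc a b c = Mabc a' b' c' := by
    rintro a b c a' b' c' rfl rfl rfl; rfl
  refine Eq.trans (comp3 _ _ _ _ _ _ ?_ ?_ ?_) hMeq.symm <;>
    (apply Complex.ext <;>
      simp only [Complex.add_re, Complex.add_im, Complex.mul_re, Complex.mul_im,
        Complex.neg_re, Complex.neg_im, Complex.one_re, Complex.one_im,
        Complex.zero_re, Complex.zero_im, Complex.I_re, Complex.I_im,
        Complex.ofReal_re, Complex.ofReal_im, mul_zero, zero_mul, mul_one, one_mul,
        sub_zero, zero_sub, add_zero, zero_add, neg_zero, neg_neg] <;>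
      field_simp <;> ring)

end CHaux


namespace CHaux

set_option maxHeartbeats 1000000 in
lemma maplie (t s r : ℝ) (hs : s ≠ 0) (hr2 : r ^ 2 = 1 + 2 * t ^ 2 / s ^ 2)
    {L : Type} [LieRing L] [LieAlgebra ℝ L] (e : Module.Basis (Fin 6) ℝ L)
    (h01 : ⁅e 0, e 1⁆ = (-t) • e 4) (h23 : ⁅e 2, e 3⁆ = (-(2*t)) • e 4)
    (h02 : ⁅e 0, e 2⁆ = (-s) • e 4) (h13 : ⁅e 1, e 3⁆ = s • e 4)
    (h03 : ⁅e 0, e 3⁆ = (-s) • e 5) (h12 : ⁅e 1, e 2⁆ = (-s) • e 5)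
    (h04 : ⁅e 0, e 4⁆ = 0) (h05 : ⁅e 0, e 5⁆ = 0)
    (h14 : ⁅e 1, e 4⁆ = 0) (h15 : ⁅e 1, e 5⁆ = 0)
    (h24 : ⁅e 2, e 4⁆ = 0) (h25 : ⁅e 2, e 5⁆ = 0)
    (h34 : ⁅e 3, e 4⁆ = 0) (h35 : ⁅e 3, e 5⁆ = 0)
    (h45 : ⁅e 4, e 5⁆ = 0) :
    ∀ x y : L, phiAux t s r e ⁅x, y⁆ = ⁅phiAux t s r e x, phiAux t s r e y⁆ := by
  have h10 : ⁅e 1, e 0⁆ = (-(-t)) • e 4 := by rw [← lie_skew, h01, ← neg_smul]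
  have h32 : ⁅e 3, e 2⁆ = (-(-(2*t))) • e 4 := by rw [← lie_skew, h23, ← neg_smul]
  have h20 : ⁅e 2, e 0⁆ = (-(-s)) • e 4 := by rw [← lie_skew, h02, ← neg_smul]
  have h31 : ⁅e 3, e 1⁆ = (-s) • e 4 := by rw [← lie_skew, h13, ← neg_smul]
  have h30 : ⁅e 3, e 0⁆ = (-(-s)) • e 5 := by rw [← lie_skew, h03, ← neg_smul]
  have h21 : ⁅e 2, e 1⁆ = (-(-s)) • e 5 := by rw [← lie_skew, h12, ← neg_smul]
  have h40 : ⁅e 4, e 0⁆ = 0 := by rw [← lie_skew, h04, neg_zero]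
  have h50 : ⁅e 5, e 0⁆ = 0 := by rw [← lie_skew, h05, neg_zero]
  have h41 : ⁅e 4, e 1⁆ = 0 := by rw [← lie_skew, h14, neg_zero]
  have h51 : ⁅e 5, e 1⁆ = 0 := by rw [← lie_skew, h15, neg_zero]
  have h42 : ⁅e 4, e 2⁆ = 0 := by rw [← lie_skew, h24, neg_zero]
  have h52 : ⁅e 5, e 2⁆ = 0 := by rw [← lie_skew, h25, neg_zero]
  have h43 : ⁅e 4, e 3⁆ = 0 := by rw [← lie_skew, h34, neg_zero]
  have h53 : ⁅e 5, e 3⁆ = 0 := by rw [← lie_skew, h35, neg_zero]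
  have h54 : ⁅e 5, e 4⁆ = 0 := by rw [← lie_skew, h45, neg_zero]
  have hc : (r : ℂ) ^ 2 = 1 + 2 * (t : ℂ) ^ 2 / (s : ℂ) ^ 2 := by
    exact_mod_cast congrArg (Complex.ofReal) hr2
  have hI := Complex.I_sq
  have hsC : (s : ℂ) ≠ 0 := Complex.ofReal_ne_zero.mpr hs
  have hr2' : s ^ 2 * r ^ 2 = s ^ 2 + 2 * t ^ 2 := by
    rw [hr2]; field_simp
  have hc' : (s : ℂ) ^ 2 * (r : ℂ) ^ 2 = (s : ℂ) ^ 2 + 2 * (t : ℂ) ^ 2 := by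
    exact_mod_cast congrArg (Complex.ofReal) hr2'
  have Fcongr : ∀ a b c a' b' c' : ℂ, a = a' → b = b' → c = c' → F a b c = F a' b' c' := by
    rintro a b c a' b' c' rfl rfl rfl; rfl
  have key : ∀ i j : Fin 6,
      phiAux t s r e ⁅e i, e j⁆ = ⁅phiAux t s r e (e i), phiAux t s r e (e j)⁆ := by
    intro i j
    fin_cases i <;> fin_cases j <;>
      simp only [Fin.zero_eta, Fin.mk_one, Fin.reduceFinMk, Fin.isValue,
        h01, h02, h03, h04, h05, h12, h13, h14, h15, h23, h24, h25, h34, h35, h45,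
        h10, h20, h30, h40, h50, h21, h31, h41, h51, h32, h42, h52, h43, h53, h54,
        lie_self, map_zero, map_smul, phiE, fAux0, fAux1, fAux2, fAux3, fAux4, fAux5,
        smulF, bracketF] <;>
      (try simp only [fAux0, fAux1, fAux2, fAux3, fAux4, fAux5, smulF, bracketF]) <;>
      first
        | rfl
        | (refine (F00eq _ ?_).symm
           push_cast
           ring)
        | (refine F00eq _ ?_
           push_cast
           ring)
        | (refine Fcongr _ _ _ _ _ _ ?_ ?_ ?_ <;> push_cast <;>
            first
              | ring1
              | (field_simp
                 first
                   | ring1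
                   | done
                   | linear_combination ((s:ℂ)^2*(r:ℂ)^2) * hI - hc'
                   | linear_combination (-(s:ℂ)^2*(r:ℂ)^2) * hI + hc'
                   | linear_combination hc'
                   | linear_combination -hc'))
  let B1 : L →ₗ[ℝ] L →ₗ[ℝ] complexHeisenberg :=
    LinearMap.mk₂ ℝ (fun x y => phiAux t s r e ⁅x, y⁆)
      (fun m₁ m₂ n => by rw [add_lie, map_add])
      (fun c m n => by rw [smul_lie, map_smul])
      (fun m n₁ n₂ => by rw [lie_add, map_add])
      (fun c m n => by rw [lie_smul, map_smul])
  let B2 : L →ₗ[ℝ] L →ₗ[ℝ] complexHeisenberg :=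
    LinearMap.mk₂ ℝ (fun x y => ⁅phiAux t s r e x, phiAux t s r e y⁆)
      (fun m₁ m₂ n => by rw [map_add, add_lie])
      (fun c m n => by rw [map_smul, smul_lie])
      (fun m n₁ n₂ => by rw [map_add, lie_add])
      (fun c m n => by rw [map_smul, lie_smul])
  have hB : B1 = B2 := LinearMap.ext_basis e e fun i j => key i j
  intro x y
  exact LinearMap.congr_fun (LinearMap.congr_fun hB x) y

end CHaux


/-- For all real `t`, `s` with `s ≠ 0`, the Lie algebra `𝔫_{t,s}` — i.e. any real Lie algebra
with a basis `e₁, …, e₆` whose only nonzero brackets among basis vectors are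
`[e₁,e₂] = −t e₅`, `[e₃,e₄] = −2t e₅`, `[e₁,e₃] = −s e₅`, `[e₂,e₄] = s e₅`,
`[e₁,e₄] = −s e₆`, `[e₂,e₃] = −s e₆` — is isomorphic, as a real Lie algebra, to the real
Lie algebra underlying the complex Heisenberg Lie algebra of strictly upper triangular
`3 × 3` complex matrices. -/
theorem nts_iso_complexHeisenberg (t s : ℝ) (hs : s ≠ 0)
    (L : Type) [LieRing L] [LieAlgebra ℝ L] (e : Module.Basis (Fin 6) ℝ L)
    (h01 : ⁅e 0, e 1⁆ = (-t) • e 4) (h23 : ⁅e 2, e 3⁆ = (-(2*t)) • e 4)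
    (h02 : ⁅e 0, e 2⁆ = (-s) • e 4) (h13 : ⁅e 1, e 3⁆ = s • e 4)
    (h03 : ⁅e 0, e 3⁆ = (-s) • e 5) (h12 : ⁅e 1, e 2⁆ = (-s) • e 5)
    (h04 : ⁅e 0, e 4⁆ = 0) (h05 : ⁅e 0, e 5⁆ = 0)
    (h14 : ⁅e 1, e 4⁆ = 0) (h15 : ⁅e 1, e 5⁆ = 0)
    (h24 : ⁅e 2, e 4⁆ = 0) (h25 : ⁅e 2, e 5⁆ = 0)
    (h34 : ⁅e 3, e 4⁆ = 0) (h35 : ⁅e 3, e 5⁆ = 0)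
    (h45 : ⁅e 4, e 5⁆ = 0) :
    Nonempty (L ≃ₗ⁅ℝ⁆ complexHeisenberg) := by
  have hq : (0:ℝ) < 1 + 2 * t ^ 2 / s ^ 2 := by positivity
  set r := Real.sqrt (1 + 2 * t ^ 2 / s ^ 2) with hrdef
  have hr : r ≠ 0 := ne_of_gt (Real.sqrt_pos.mpr hq)
  have hr2 : r ^ 2 = 1 + 2 * t ^ 2 / s ^ 2 := Real.sq_sqrt hq.le
  have hlie := CHaux.maplie t s r hs hr2 e h01 h23 h02 h13 h03 h12 h04 h05 h14 h15
    h24 h25 h34 h35 h45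
  exact ⟨{ toLieHom := { toLinearMap := CHaux.phiAux t s r e,
                         map_lie' := fun {x y} => hlie x y },
           invFun := CHaux.psiAux t s r e,
           left_inv := fun x => LinearMap.congr_fun (CHaux.psi_phi t s r hs hr e) x,
           right_inv := fun m => LinearMap.congr_fun (CHaux.phi_psi t s r hs hr e) m }⟩
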